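/- Every morphism f : X → Y in a Hom-finite Krull-Schmidt additive category over a commutative artinian ring has a right minimal version: there exists a right minimal morphism f' : X' → Y such that f and f' factor through each other. -/

import Mathlib

open CategoryTheory CategoryTheory.Limits

universe v u u'

variable {C : Type u} [Category.{v} C]

/-- `f` is right `Cd`-determined. -/
def RightDetermined {X Y : C} (f : X ⟶ Y) (Cd : C) : Prop :=
  ∀ ⦃T : C⦄ (g : T ⟶ Y), (∀ h : Cd ⟶ T, ∃ s : Cd ⟶ X, h ≫ g = s ≫ f) →
    ∃ t : T ⟶ X, g = t ≫ f

def LeftDetermined {X Y : C} (f : X ⟶ Y) (Kd : C) : Prop :=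
  ∀ ⦃T : C⦄ (g : X ⟶ T), (∀ h : T ⟶ Kd, ∃ s : Y ⟶ Kd, g ≫ h = f ≫ s) →
    ∃ t : Y ⟶ T, g = f ≫ t

def IsSummand (Z X : C) : Prop := ∃ (s : Z ⟶ X) (r : X ⟶ Z), s ≫ r = 𝟙 Z

section Preadd
variable [Preadditive C]

/-- membership in the radical of the category, via the Jacobson radical of `End`. -/
def radHom {T Z : C} (h : T ⟶ Z) : Prop :=
  ∀ u : Z ⟶ T, (u ≫ h : CategoryTheory.End Z) ∈ Ideal.jacobson (⊥ : Ideal (CategoryTheory.End Z))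

def AlmostFactorsThrough {X Y Z : C} (g : Z ⟶ Y) (f : X ⟶ Y) : Prop :=
  ¬ (∃ s : Z ⟶ X, g = s ≫ f) ∧
    ∀ ⦃T : C⦄ (h : T ⟶ Z), radHom h → ∃ s : T ⟶ X, h ≫ g = s ≫ f

def Indec (Z : C) : Prop :=
  ¬ Limits.IsZero Z ∧ ∀ e : Z ⟶ Z, e ≫ e = e → e = 0 ∨ e = 𝟙 Z

end Preadd

def RightAlmostSplit {E Y : C} (d : E ⟶ Y) : Prop :=
  ¬ (∃ s : Y ⟶ E, s ≫ d = 𝟙 Y) ∧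
    ∀ ⦃T : C⦄ (g : T ⟶ Y), ¬ (∃ s : Y ⟶ T, s ≫ g = 𝟙 Y) → ∃ t : T ⟶ E, t ≫ d = g

def LeftAlmostSplit {X E : C} (i : X ⟶ E) : Prop :=
  ¬ (∃ r : E ⟶ X, i ≫ r = 𝟙 X) ∧
    ∀ ⦃T : C⦄ (g : X ⟶ T), ¬ (∃ r : T ⟶ X, g ≫ r = 𝟙 X) → ∃ t : E ⟶ T, i ≫ t = g

def RightMinimal {X Y : C} (f : X ⟶ Y) : Prop :=
  ∀ g : X ⟶ X, g ≫ f = f → IsIso g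

def RightEquiv {X X' Y : C} (f : X ⟶ Y) (f' : X' ⟶ Y) : Prop :=
  (∃ u : X ⟶ X', f = u ≫ f') ∧ (∃ v : X' ⟶ X, f' = v ≫ f)

/-- A Quillen exact structure on an additive category. -/
class ExactStruct (C : Type u) [Category.{v} C] [Preadditive C] [HasZeroObject C]
    [HasBinaryBiproducts C] where
  IsConflation : ∀ {X E Y : C}, (X ⟶ E) → (E ⟶ Y) → Prop
  comp_zero : ∀ {X E Y : C} {i : X ⟶ E} {d : E ⟶ Y}, IsConflation i d → i ≫ d = 0
  isKernel : ∀ {X E Y : C} {i : X ⟶ E} {d : E ⟶ Y}, IsConflation i d →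
    ∀ {T : C} (g : T ⟶ E), g ≫ d = 0 → ∃! t : T ⟶ X, t ≫ i = g
  isCokernel : ∀ {X E Y : C} {i : X ⟶ E} {d : E ⟶ Y}, IsConflation i d →
    ∀ {T : C} (g : E ⟶ T), i ≫ g = 0 → ∃! t : Y ⟶ T, d ≫ t = g
  split_conflation : ∀ X Y : C, IsConflation (biprod.inl : X ⟶ X ⊞ Y) (biprod.snd : X ⊞ Y ⟶ Y)
  defl_comp : ∀ {X Y Z : C} (d : X ⟶ Y) (d' : Y ⟶ Z),
    (∃ (K : C) (i : K ⟶ X), IsConflation i d) → (∃ (K : C) (i : K ⟶ Y), IsConflation i d') →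
    ∃ (K : C) (i : K ⟶ X), IsConflation i (d ≫ d')
  infl_comp : ∀ {X Y Z : C} (i : X ⟶ Y) (i' : Y ⟶ Z),
    (∃ (W : C) (d : Y ⟶ W), IsConflation i d) → (∃ (W : C) (d : Z ⟶ W), IsConflation i' d) →
    ∃ (W : C) (d : Z ⟶ W), IsConflation (i ≫ i') d
  pullback_defl : ∀ {X Y Z : C} (d : X ⟶ Y) (g : Z ⟶ Y),
    (∃ (K : C) (i : K ⟶ X), IsConflation i d) →
    ∃ (E : C) (g' : E ⟶ X) (d' : E ⟶ Z), IsPullback g' d' d g ∧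
      ∃ (K : C) (i : K ⟶ E), IsConflation i d'
  pushout_infl : ∀ {X Y Z : C} (i : X ⟶ Y) (g : X ⟶ Z),
    (∃ (W : C) (d : Y ⟶ W), IsConflation i d) →
    ∃ (E : C) (i' : Z ⟶ E) (g' : Y ⟶ E), IsPushout i g g' i' ∧
      ∃ (W : C) (d : E ⟶ W), IsConflation i' d

section Exact
variable [Preadditive C] [HasZeroObject C] [HasBinaryBiproducts C] [ExactStruct C]

def IsDeflation {X Y : C} (d : X ⟶ Y) : Prop :=
  ∃ (K : C) (i : K ⟶ X), ExactStruct.IsConflation i d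

def IsInflation {X Y : C} (i : X ⟶ Y) : Prop :=
  ∃ (Z : C) (d : Y ⟶ Z), ExactStruct.IsConflation i d

/-- projectively trivial morphisms: those factoring through every deflation onto the target. -/
def ProjTrivial {X Y : C} (f : X ⟶ Y) : Prop :=
  ∀ ⦃E : C⦄ (d : E ⟶ Y), IsDeflation d → ∃ g : X ⟶ E, f = g ≫ d

/-- injectively trivial morphisms: those factoring through every inflation from the source. -/
def InjTrivial {X Y : C} (f : X ⟶ Y) : Prop :=
  ∀ ⦃E : C⦄ (i : X ⟶ E), IsInflation i → ∃ g : E ⟶ Y, f = i ≫ g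

/-- `f` factors through `α` in the projectively stable category. -/
def StablyFactors {T X Y : C} (f : T ⟶ Y) (α : X ⟶ Y) : Prop :=
  ∃ g : T ⟶ X, ProjTrivial (f - g ≫ α)

/-- `α` is right `Cd`-determined in the projectively stable category. -/
def RightDeterminedStable {X Y : C} (α : X ⟶ Y) (Cd : C) : Prop :=
  ∀ ⦃T : C⦄ (g : T ⟶ Y), (∀ h : Cd ⟶ T, StablyFactors (h ≫ g) α) → StablyFactors g α

/-- `X ≅ Y` in the projectively stable category. -/
def StablyIso (X Y : C) : Prop :=
  ∃ (f : X ⟶ Y) (g : Y ⟶ X), ProjTrivial (f ≫ g - 𝟙 X) ∧ ProjTrivial (g ≫ f - 𝟙 Y)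

def ProjObj (P : C) : Prop :=
  ∀ ⦃E : C⦄ (d : E ⟶ P), IsDeflation d → ∃ s : P ⟶ E, s ≫ d = 𝟙 P

def InjObj (I : C) : Prop :=
  ∀ ⦃E : C⦄ (i : I ⟶ E), IsInflation i → ∃ r : E ⟶ I, i ≫ r = 𝟙 I

def AlmostSplitConflation {X E Y : C} (i : X ⟶ E) (d : E ⟶ Y) : Prop :=
  ExactStruct.IsConflation i d ∧ LeftAlmostSplit i ∧ RightAlmostSplit d

/-- membership in `𝒞_l`: every indecomposable direct summand is injective or is the first
term of an almost split conflation. -/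
def MemCl (K : C) : Prop :=
  ∀ Z : C, IsSummand Z K → Indec Z →
    InjObj Z ∨ ∃ (E W : C) (i : Z ⟶ E) (d : E ⟶ W), AlmostSplitConflation i d

/-- membership in `𝒞_r`: every indecomposable direct summand is projective or is the third
term of an almost split conflation. -/
def MemCr (X : C) : Prop :=
  ∀ Z : C, IsSummand Z X → Indec Z →
    ProjObj Z ∨ ∃ (K E : C) (i : K ⟶ E) (d : E ⟶ Z), AlmostSplitConflation i d

end Exact

/-- Krull–Schmidt: every object is a finite biproduct of objects with local endomorphism ring. -/
class KrullSchmidtCat (C : Type u) [Category.{v} C] [Preadditive C]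
    [HasFiniteBiproducts C] : Prop where
  decomp : ∀ X : C, ∃ (n : ℕ) (f : Fin n → C),
    (∀ i, IsLocalRing (CategoryTheory.End (f i))) ∧ Nonempty (X ≅ ⨁ f)



section RightMinimalAux

namespace RMVaux

variable [Preadditive C]

/-- Auxiliary "radical" predicate: `u` is quasi-regular on the right. -/
def Rd {A B : C} (u : A ⟶ B) : Prop := ∀ v : B ⟶ A, IsIso (𝟙 A - u ≫ v)

lemma swap_isIso {A B : C} (x : A ⟶ B) (y : B ⟶ A)
    (h : IsIso (𝟙 A - x ≫ y)) : IsIso (𝟙 B - y ≫ x) := by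
  set i := inv (𝟙 A - x ≫ y) with hi
  have h1 : x ≫ y ≫ i = i - 𝟙 A := by
    have := IsIso.hom_inv_id (𝟙 A - x ≫ y)
    rw [Preadditive.sub_comp, Category.id_comp, Category.assoc] at this
    rw [← hi] at this
    linear_combination (norm := abel) -this
  have h2 : i ≫ x ≫ y = i - 𝟙 A := by
    have := IsIso.inv_hom_id (𝟙 A - x ≫ y)
    rw [Preadditive.comp_sub, Category.comp_id, ← hi] at this
    linear_combination (norm := abel) -this
  have h1' := reassoc_of% h1
  have h2' := reassoc_of% h2
  refine ⟨⟨𝟙 B + y ≫ i ≫ x, ?_, ?_⟩⟩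
  · simp only [Preadditive.sub_comp, Preadditive.comp_sub, Preadditive.comp_add,
      Preadditive.add_comp, Category.id_comp, Category.comp_id, Category.assoc, h1']
    abel
  · simp only [Preadditive.sub_comp, Preadditive.comp_sub, Preadditive.comp_add,
      Preadditive.add_comp, Category.id_comp, Category.comp_id, Category.assoc, h2']
    abel

lemma Rd.precomp {A' A B : C} {u : A ⟶ B} (hu : Rd u) (w : A' ⟶ A) : Rd (w ≫ u) := by
  intro v
  have := hu (v ≫ w)
  have := swap_isIso (u ≫ v) w (by simpa using this)
  simpa using this

lemma Rd.postcomp {A B B' : C} {u : A ⟶ B} (hu : Rd u) (w : B ⟶ B') : Rd (u ≫ w) := by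
  intro v
  simpa using hu (w ≫ v)

lemma Rd.zero {A B : C} : Rd (0 : A ⟶ B) := by
  intro v; simpa using (inferInstance : IsIso (𝟙 A))

lemma Rd.add {A B : C} {u₁ u₂ : A ⟶ B} (h₁ : Rd u₁) (h₂ : Rd u₂) : Rd (u₁ + u₂) := by
  intro v
  have i1 : IsIso (𝟙 A - u₁ ≫ v) := h₁ v
  have i2 : IsIso (𝟙 A - (inv (𝟙 A - u₁ ≫ v) ≫ u₂) ≫ v) := (h₂.precomp _) v
  have : (𝟙 A - u₁ ≫ v) ≫ (𝟙 A - (inv (𝟙 A - u₁ ≫ v) ≫ u₂) ≫ v) = 𝟙 A - (u₁ + u₂) ≫ v := by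
    simp only [Preadditive.comp_sub, Preadditive.add_comp, Category.comp_id,
      IsIso.hom_inv_id_assoc, Category.assoc]
    abel
  rw [← this]
  infer_instance

lemma Rd.sum {A B : C} {ι : Type*} (s : Finset ι) (u : ι → (A ⟶ B))
    (h : ∀ i ∈ s, Rd (u i)) : Rd (∑ i ∈ s, u i) := by
  classical
  induction s using Finset.induction with
  | empty => simpa using Rd.zero
  | @insert _ _ hx ih =>
    rw [Finset.sum_insert hx]
    exact (h _ (Finset.mem_insert_self _ _)).add (ih fun i hi => h i (Finset.mem_insert_of_mem hi))

private lemma idem_unit_eq_one {R : Type*} [Monoid R] {e : R} (he : e * e = e)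
    (h : IsUnit e) : e = 1 := by
  have : e * e = e * 1 := by simpa using he
  exact h.mul_left_cancel this

lemma rd_of_not_isIso {A B : C} [IsLocalRing (CategoryTheory.End A)]
    [IsLocalRing (CategoryTheory.End B)] {u : A ⟶ B} (hu : ¬ IsIso u) : Rd u := by
  intro v
  set a : CategoryTheory.End A := u ≫ v with ha'
  by_cases ha : IsUnit a
  · exfalso
    have haIso : IsIso (u ≫ v) := (isUnit_iff_isIso a).mp ha
    set w : A ⟶ A := inv (u ≫ v) with hw
    have hw1 : (u ≫ v) ≫ w = 𝟙 A := IsIso.hom_inv_id _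
    have hw2 : w ≫ (u ≫ v) = 𝟙 A := IsIso.inv_hom_id _
    set eE : CategoryTheory.End B := v ≫ w ≫ u with he
    have hee : (eE : B ⟶ B) ≫ eE = eE := by
      rw [he]
      simp only [Category.assoc]
      rw [← Category.assoc u v, ← Category.assoc (u ≫ v) w, hw1, Category.id_comp]
    have hue : u ≫ (eE : B ⟶ B) = u := by
      rw [he, ← Category.assoc u v, ← Category.assoc (u ≫ v) w, hw1, Category.id_comp]
    have heem : eE * eE = eE := hee
    have hcases : IsUnit eE ∨ IsUnit (1 - eE) :=
      IsLocalRing.isUnit_or_isUnit_of_add_one (by abel)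
    rcases hcases with hcase | hcase
    · have h1 : eE = 1 := idem_unit_eq_one heem hcase
      refine hu ⟨v ≫ w, ?_, ?_⟩
      · rw [← Category.assoc]; exact hw1
      · show (v ≫ w) ≫ u = 𝟙 B
        rw [Category.assoc, ← he]; exact h1
    · have heem2 : (1 - eE) * (1 - eE) = 1 - eE := by
        rw [mul_sub, mul_one, sub_mul, one_mul, heem]; abel
      have h2 : (1 : CategoryTheory.End B) - eE = 1 := idem_unit_eq_one heem2 hcase
      have h0 : eE = 0 := by
        have := sub_eq_self.mp h2; simpa using this
      have hu0 : u = 0 := by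
        rw [← hue, h0]; simp
      have h10 : (𝟙 A : A ⟶ A) = 0 := by rw [← hw1, hu0, zero_comp, zero_comp]
      exact one_ne_zero (α := CategoryTheory.End A) h10
  · have hbu : IsUnit (1 - a) := by
      rcases IsLocalRing.isUnit_or_isUnit_of_add_one
        (a := a) (b := 1 - a) (by abel) with h | h
      · exact absurd h ha
      · exact h
    have : IsIso ((1 - a : CategoryTheory.End A) : A ⟶ A) := (isUnit_iff_isIso _).mp hbu
    convert this using 1
    rfl

lemma rd_matrix {ι : Type} [Fintype ι] (Z : ι → C) [HasBiproduct Z] {b : (⨁ Z) ⟶ (⨁ Z)}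
    (h : ∀ i j, Rd (biproduct.ι Z i ≫ b ≫ biproduct.π Z j)) : Rd b := by
  have hrow : ∀ i, Rd (biproduct.ι Z i ≫ b) := by
    intro i
    have heq : biproduct.ι Z i ≫ b =
        ∑ j : ι, (biproduct.ι Z i ≫ b ≫ biproduct.π Z j) ≫ biproduct.ι Z j := by
      conv_lhs => rw [← Category.comp_id (biproduct.ι Z i ≫ b), ← biproduct.total,
        Preadditive.comp_sum]
      simp only [Category.assoc]
    rw [heq]
    exact Rd.sum _ _ fun j _ => (h i j).postcomp _
  have heq : b = ∑ i : ι, biproduct.π Z i ≫ (biproduct.ι Z i ≫ b) := by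
    conv_lhs => rw [← Category.id_comp b, ← biproduct.total, Preadditive.sum_comp]
    simp only [Category.assoc]
  have hsum : Rd (∑ i : ι, biproduct.π Z i ≫ (biproduct.ι Z i ≫ b)) :=
    Rd.sum _ _ fun i _ => (hrow i).precomp _
  rwa [← heq] at hsum

lemma rightEquiv_refl {X Y : C} (f : X ⟶ Y) : RightEquiv f f :=
  ⟨⟨𝟙 _, by simp⟩, ⟨𝟙 _, by simp⟩⟩

lemma rightEquiv_trans {X₁ X₂ X₃ Y : C} {f₁ : X₁ ⟶ Y} {f₂ : X₂ ⟶ Y} {f₃ : X₃ ⟶ Y}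
    (h₁ : RightEquiv f₁ f₂) (h₂ : RightEquiv f₂ f₃) : RightEquiv f₁ f₃ := by
  obtain ⟨⟨u₁, hu₁⟩, ⟨v₁, hv₁⟩⟩ := h₁
  obtain ⟨⟨u₂, hu₂⟩, ⟨v₂, hv₂⟩⟩ := h₂
  exact ⟨⟨u₁ ≫ u₂, by rw [hu₁, hu₂, Category.assoc]⟩,
    ⟨v₂ ≫ v₁, by rw [hv₂, hv₁, Category.assoc]⟩⟩

variable [HasFiniteBiproducts C]

lemma key (n : ℕ) : ∀ (ι : Type) [Fintype ι], Fintype.card ι = n →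
    ∀ (Z : ι → C), (∀ i, IsLocalRing (CategoryTheory.End (Z i))) →
    ∀ (Y : C) (f : (⨁ Z) ⟶ Y),
    ∃ (X' : C) (f' : X' ⟶ Y), RightMinimal f' ∧ RightEquiv f f' := by
  induction n using Nat.strong_induction_on with
  | _ n IH =>
  intro ι _ hcard Z hloc Y f
  classical
  by_cases hmin : RightMinimal f
  · exact ⟨_, f, hmin, rightEquiv_refl f⟩
  rw [RightMinimal] at hmin; push_neg at hmin
  obtain ⟨g, hgf, hg⟩ := hmin
  set b : (⨁ Z) ⟶ (⨁ Z) := 𝟙 _ - g with hb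
  have hbf : b ≫ f = 0 := by
    rw [hb, Preadditive.sub_comp, Category.id_comp, hgf, sub_self]
  have hexists : ∃ i j, ¬ Rd (biproduct.ι Z i ≫ b ≫ biproduct.π Z j) := by
    by_contra hall; push_neg at hall
    have hrd : Rd b := rd_matrix Z fun i j => hall i j
    have : IsIso (𝟙 (⨁ Z) - b ≫ 𝟙 _) := hrd (𝟙 _)
    rw [Category.comp_id, hb, sub_sub_cancel] at this
    exact hg this
  obtain ⟨i, j, hnd⟩ := hexists
  haveI := hloc i; haveI := hloc j
  have hiso : IsIso (biproduct.ι Z i ≫ b ≫ biproduct.π Z j) := by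
    by_contra hnot
    exact hnd (rd_of_not_isIso hnot)
  set β := biproduct.ι Z i ≫ b ≫ biproduct.π Z j with hβ
  set s : Z j ⟶ (⨁ Z) := inv β ≫ biproduct.ι Z i ≫ b with hs
  have hsπ : s ≫ biproduct.π Z j = 𝟙 (Z j) := by
    rw [hs, Category.assoc, Category.assoc, ← hβ]
    exact IsIso.inv_hom_id β
  have hsf : s ≫ f = 0 := by
    rw [hs, Category.assoc, Category.assoc, hbf, comp_zero, comp_zero]
  set d : Z j ⟶ (⨁ Z) := s - biproduct.ι Z j with hd
  have hdπ : d ≫ biproduct.π Z j = 0 := by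
    rw [hd, Preadditive.sub_comp, hsπ, biproduct.ι_π_self, sub_self]
  set θ : (⨁ Z) ⟶ (⨁ Z) := 𝟙 _ + biproduct.π Z j ≫ d with hθ
  have hθiso : IsIso θ := by
    refine ⟨⟨𝟙 _ - biproduct.π Z j ≫ d, ?_, ?_⟩⟩ <;>
    · rw [hθ]
      simp only [Preadditive.add_comp, Preadditive.comp_add, Preadditive.sub_comp,
        Preadditive.comp_sub, Category.id_comp, Category.comp_id, Category.assoc]
      rw [reassoc_of% hdπ]
      simp only [zero_comp, comp_zero]
      abel
  have hιθ : biproduct.ι Z j ≫ θ = s := by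
    rw [hθ, Preadditive.comp_add, Category.comp_id, ← Category.assoc,
      biproduct.ι_π_self, Category.id_comp, hd]
    abel
  set f₂ := θ ≫ f with hf₂
  have hzf₂ : biproduct.ι Z j ≫ f₂ = 0 := by
    rw [hf₂, ← Category.assoc, hιθ, hsf]
  set p : ι → Prop := fun l => l ≠ j with hp
  set f₃ := biproduct.fromSubtype Z p ≫ f₂ with hf₃
  have hback0 : biproduct.toSubtype Z p ≫ biproduct.fromSubtype Z p ≫ f₂ = f₂ := by
    rw [← Category.assoc, biproduct.toSubtype_fromSubtype]
    apply biproduct.hom_ext'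
    intro l
    rw [biproduct.ι_map_assoc]
    by_cases hl : p l
    · rw [if_pos hl, Category.id_comp]
    · have hlj : l = j := not_not.mp hl
      rw [if_neg hl, zero_comp, hlj, hzf₂]
  have hback : f₂ = biproduct.toSubtype Z p ≫ f₃ := by
    rw [hf₃, hback0]
  have hcard' : Fintype.card (Subtype p) = n - 1 := by
    have h2 := Fintype.card_subtype_compl (fun l : ι => l = j)
    rw [Fintype.card_subtype_eq, hcard] at h2
    rw [show Fintype.card (Subtype p) = Fintype.card {x : ι // ¬ x = j} from
      Fintype.card_congr (Equiv.subtypeEquivRight (fun l => Iff.rfl))]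
    exact h2
  have hn1 : n - 1 < n := by
    have : 0 < n := by
      rw [← hcard]
      exact Fintype.card_pos_iff.mpr ⟨j⟩
    omega
  obtain ⟨X', f', hmin', hre'⟩ := IH (n - 1) hn1 (Subtype p) hcard'
    (Subtype.restrict p Z) (fun l => hloc l.1) Y f₃
  refine ⟨X', f', hmin', ?_⟩
  have e1 : RightEquiv f f₂ :=
    ⟨⟨inv θ, by rw [hf₂, IsIso.inv_hom_id_assoc]⟩, ⟨θ, hf₂⟩⟩
  have e2 : RightEquiv f₂ f₃ := ⟨⟨biproduct.toSubtype Z p, hback⟩,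
    ⟨biproduct.fromSubtype Z p, hf₃⟩⟩
  exact rightEquiv_trans (rightEquiv_trans e1 e2) hre'

end RMVaux

end RightMinimalAux

section Statement

variable (k : Type u') [CommRing k] [IsArtinianRing k]
variable [Preadditive C] [CategoryTheory.Linear k C] [HasFiniteBiproducts C]
variable [∀ X Y : C, Module.Finite k (X ⟶ Y)] [KrullSchmidtCat C]

theorem stmt_19 {X Y : C} (f : X ⟶ Y) :
    ∃ (X' : C) (f' : X' ⟶ Y), RightMinimal f' ∧ RightEquiv f f' := by
  obtain ⟨n, Zfam, hloc, ⟨α⟩⟩ := KrullSchmidtCat.decomp (C := C) X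
  obtain ⟨X', f', hmin, hre⟩ := RMVaux.key n (Fin n) (Fintype.card_fin n) Zfam hloc Y
    (α.inv ≫ f)
  refine ⟨X', f', hmin, ?_⟩
  have e0 : RightEquiv f (α.inv ≫ f) := ⟨⟨α.hom, by simp⟩, ⟨α.inv, rfl⟩⟩
  exact RMVaux.rightEquiv_trans e0 hre

end Statement
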